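/- (Norm monotonicity of the proximal gradient step) Let f be μ-strongly convex and L-smooth (0 ≤ μ ≤ L), g proper closed convex, φ = f + g, t > 0, ρ(t) := max{|1 − Lt|, |1 − μt|}. For x ∈ ℝ^n let x⁺ := prox_{tg}(x − t∇f(x)) and s⁺ ∈ ∂g(x⁺) the subgradient with x⁺ = x − t(∇f(x) + s⁺). Then ‖∇f(x⁺) + s⁺‖ ≤ ρ(t)·(1/t)‖x − x⁺‖. -/

import Mathlib

open scoped RealInnerProductSpace

open Filter Set Topology InnerProductSpace

section Aux
variable {E : Type*} [NormedAddCommGroup E] [InnerProductSpace ℝ E] [CompleteSpace E]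

lemma aux_dirDeriv (f : E → ℝ) (f' : E → E) (hdiff : ∀ z, HasGradientAt f (f' z) z)
    (x d : E) (τ : ℝ) :
    HasDerivAt (fun r : ℝ => f (x + r • d)) ⟪f' (x + τ • d), d⟫ τ := by
  have hline : HasDerivAt (fun r : ℝ => x + r • d) d τ := by
    simpa using ((hasDerivAt_id τ).smul_const d).const_add x
  have h := (hasGradientAt_iff_hasFDerivAt.mp (hdiff (x + τ • d))).comp_hasDerivAt τ hline
  exact h

lemma aux_lower (f : E → ℝ) (f' : E → E) (hdiff : ∀ z, HasGradientAt f (f' z) z)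
    (hconv : ConvexOn ℝ Set.univ f) (x y : E) :
    f x + ⟪f' x, y - x⟫ ≤ f y := by
  set d := y - x with hd
  have hder : HasDerivAt (fun r : ℝ => f (x + r • d)) ⟪f' x, d⟫ 0 := by
    simpa using aux_dirDeriv f f' hdiff x d 0
  have hslope := hasDerivAt_iff_tendsto_slope.mp hder
  have hmono : Tendsto (slope (fun r : ℝ => f (x + r • d)) 0) (𝓝[>] 0) (𝓝 ⟪f' x, d⟫) :=
    hslope.mono_left (nhdsWithin_mono 0 (fun r hr => ne_of_gt hr))
  have hbound : ∀ᶠ r in 𝓝[>] (0 : ℝ), slope (fun r : ℝ => f (x + r • d)) 0 r ≤ f y - f x := by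
    filter_upwards [Ioc_mem_nhdsGT (zero_lt_one' ℝ)]
      with r hr
    have hc := hconv.2 (Set.mem_univ x) (Set.mem_univ y)
      (by linarith [hr.2] : (0:ℝ) ≤ 1 - r) hr.1.le (by ring : (1 - r) + r = 1)
    have hxy : (1 - r) • x + r • y = x + r • d := by rw [hd]; module
    rw [hxy] at hc
    have hsl : slope (fun r : ℝ => f (x + r • d)) 0 r = (f (x + r • d) - f x) / r := by
      simp [slope_def_field]
    rw [hsl, div_le_iff₀ hr.1]
    have heq : (1 - r) • f x + r • f y = f x + r * (f y - f x) := by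
      simp only [smul_eq_mul]; ring
    nlinarith [hc, heq.le, heq.ge]
  have hle := le_of_tendsto hmono hbound
  linarith

lemma aux_upper (f : E → ℝ) (f' : E → E) (hdiff : ∀ z, HasGradientAt f (f' z) z)
    (K : ℝ) (hK : 0 ≤ K) (hlip : ∀ a b, ‖f' a - f' b‖ ≤ K * ‖a - b‖) (x y : E) :
    f y ≤ f x + ⟪f' x, y - x⟫ + K / 2 * ‖y - x‖ ^ 2 := by
  set d := y - x with hd
  set ψ : ℝ → ℝ := fun r => f (x + r • d) - r * ⟪f' x, d⟫ - K / 2 * ‖d‖ ^ 2 * r ^ 2 with hψdef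
  have hψ : ∀ r : ℝ, HasDerivAt ψ
      (⟪f' (x + r • d), d⟫ - ⟪f' x, d⟫ - K / 2 * ‖d‖ ^ 2 * (2 * r)) r := by
    intro r
    have h1 := aux_dirDeriv f f' hdiff x d r
    have h2 : HasDerivAt (fun r : ℝ => r * ⟪f' x, d⟫) ⟪f' x, d⟫ r := hasDerivAt_mul_const _
    have h3 : HasDerivAt (fun r : ℝ => K / 2 * ‖d‖ ^ 2 * r ^ 2) (K / 2 * ‖d‖ ^ 2 * (2 * r)) r := by
      have := (hasDerivAt_pow 2 r).const_mul (K / 2 * ‖d‖ ^ 2)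
      simpa [mul_comm] using this
    exact (h1.sub h2).sub h3
  have anti : AntitoneOn ψ (Set.Icc 0 1) := by
    apply antitoneOn_of_deriv_nonpos (convex_Icc 0 1)
    · exact fun r _ => (hψ r).differentiableAt.continuousAt.continuousWithinAt
    · exact fun r _ => ((hψ r).differentiableAt).differentiableWithinAt
    · intro r hr
      rw [interior_Icc] at hr
      rw [(hψ r).deriv]
      have hb : ⟪f' (x + r • d) - f' x, d⟫ ≤ K * r * ‖d‖ ^ 2 := by
        calc ⟪f' (x + r • d) - f' x, d⟫ ≤ ‖f' (x + r • d) - f' x‖ * ‖d‖ :=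
              real_inner_le_norm _ _
          _ ≤ (K * ‖(x + r • d) - x‖) * ‖d‖ := by
              apply mul_le_mul_of_nonneg_right (hlip _ _) (norm_nonneg d)
          _ = K * r * ‖d‖ ^ 2 := by
              rw [show (x + r • d) - x = r • d by abel, norm_smul, Real.norm_eq_abs,
                abs_of_pos hr.1]
              ring
      have hsub : ⟪f' (x + r • d), d⟫ - ⟪f' x, d⟫ = ⟪f' (x + r • d) - f' x, d⟫ :=
        (inner_sub_left _ _ _).symm
      nlinarith [hb, hsub]
  have h10 : ψ 1 ≤ ψ 0 :=
    anti (by constructor <;> norm_num) (by constructor <;> norm_num) (by norm_num)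
  have hψ0 : ψ 0 = f x := by simp [hψdef]
  have hψ1 : ψ 1 = f y - ⟪f' x, d⟫ - K / 2 * ‖d‖ ^ 2 := by
    simp [hψdef, hd]
  rw [hψ0, hψ1] at h10
  linarith

lemma aux_mono (f : E → ℝ) (f' : E → E) (hdiff : ∀ z, HasGradientAt f (f' z) z)
    (hconv : ConvexOn ℝ Set.univ f) (x y : E) : 0 ≤ ⟪f' x - f' y, x - y⟫ := by
  have h1 := aux_lower f f' hdiff hconv x y
  have h2 := aux_lower f f' hdiff hconv y x
  have e1 : ⟪f' x, y - x⟫ = -⟪f' x, x - y⟫ := by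
    rw [← inner_neg_right]; congr 1; abel
  rw [inner_sub_left]
  linarith [h1, h2, e1.le, e1.ge]

lemma aux_coco_half (f : E → ℝ) (f' : E → E) (hdiff : ∀ z, HasGradientAt f (f' z) z)
    (hconv : ConvexOn ℝ Set.univ f) (K : ℝ) (hK : 0 < K)
    (hub : ∀ a b, f b ≤ f a + ⟪f' a, b - a⟫ + K / 2 * ‖b - a‖ ^ 2) (x y : E) :
    f x - ⟪f' x, x⟫ + 1 / (2 * K) * ‖f' y - f' x‖ ^ 2 ≤ f y - ⟪f' x, y⟫ := by
  set φ : E → ℝ := fun z => f z - ⟪f' x, z⟫ with hφdef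
  have hφdiff : ∀ z, HasGradientAt φ (f' z - f' x) z := by
    intro z
    rw [hasGradientAt_iff_hasFDerivAt]
    have h1 : HasFDerivAt f (InnerProductSpace.toDual ℝ E (f' z)) z :=
      hasGradientAt_iff_hasFDerivAt.mp (hdiff z)
    have h2 : HasFDerivAt (fun z : E => ⟪f' x, z⟫) (InnerProductSpace.toDual ℝ E (f' x)) z :=
      (InnerProductSpace.toDual ℝ E (f' x)).hasFDerivAt
    have := h1.sub h2
    rwa [show InnerProductSpace.toDual ℝ E (f' z - f' x)
      = InnerProductSpace.toDual ℝ E (f' z) - InnerProductSpace.toDual ℝ E (f' x) from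
      map_sub _ _ _]
  have hφconv : ConvexOn ℝ Set.univ φ := by
    have hcc : ConcaveOn ℝ Set.univ (fun z : E => ⟪f' x, z⟫) := by
      refine ⟨convex_univ, fun z _ w _ a b ha hb hab => ?_⟩
      simp [inner_add_right, inner_smul_right, smul_eq_mul]
    exact hconv.sub hcc
  set w := f' y - f' x with hw
  set u := y - (1 / K) • w with hu
  have step1 : φ x ≤ φ u := by
    have := aux_lower φ (fun z => f' z - f' x) hφdiff hφconv x u
    simpa using this
  have step2 : φ u ≤ φ y - 1 / (2 * K) * ‖w‖ ^ 2 := by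
    have h := hub y u
    have huy : u - y = -((1 / K) • w) := by rw [hu]; abel
    have e1 : ⟪f' y, u - y⟫ = ⟪w, u - y⟫ + ⟪f' x, u - y⟫ := by
      rw [hw, inner_sub_left]; ring
    have e2 : ⟪w, u - y⟫ = -(1 / K) * ‖w‖ ^ 2 := by
      rw [huy, inner_neg_right, real_inner_smul_right, real_inner_self_eq_norm_sq]; ring
    have e3 : ‖u - y‖ ^ 2 = (1 / K) ^ 2 * ‖w‖ ^ 2 := by
      rw [huy, norm_neg, norm_smul, Real.norm_eq_abs, abs_of_pos (by positivity : (0:ℝ) < 1 / K),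
        mul_pow]
    have e4 : ⟪f' x, u - y⟫ = ⟪f' x, u⟫ - ⟪f' x, y⟫ := by rw [inner_sub_right]
    have hKne : K ≠ 0 := ne_of_gt hK
    have : f u ≤ f y + (-(1 / K) * ‖w‖ ^ 2 + (⟪f' x, u⟫ - ⟪f' x, y⟫))
        + K / 2 * ((1 / K) ^ 2 * ‖w‖ ^ 2) := by
      calc f u ≤ f y + ⟪f' y, u - y⟫ + K / 2 * ‖u - y‖ ^ 2 := h
        _ = _ := by rw [e1, e2, e3, e4]
    have hKalg : K / 2 * ((1 / K) ^ 2 * ‖w‖ ^ 2) = 1 / (2 * K) * ‖w‖ ^ 2 := by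
      field_simp
    simp only [hφdef]
    have h1K : (1:ℝ) / K * ‖w‖ ^ 2 - 1 / (2 * K) * ‖w‖ ^ 2 = 1 / (2 * K) * ‖w‖ ^ 2 := by
      field_simp; ring
    nlinarith [this, hKalg]
  have := step1.trans step2
  simp only [hφdef] at this
  linarith

lemma aux_coco (f : E → ℝ) (f' : E → E) (hdiff : ∀ z, HasGradientAt f (f' z) z)
    (hconv : ConvexOn ℝ Set.univ f) (K : ℝ) (hK : 0 < K)
    (hub : ∀ a b, f b ≤ f a + ⟪f' a, b - a⟫ + K / 2 * ‖b - a‖ ^ 2) (x y : E) :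
    ‖f' x - f' y‖ ^ 2 ≤ K * ⟪f' x - f' y, x - y⟫ := by
  have h1 := aux_coco_half f f' hdiff hconv K hK hub x y
  have h2 := aux_coco_half f f' hdiff hconv K hK hub y x
  rw [show ‖f' y - f' x‖ = ‖f' x - f' y‖ from norm_sub_rev _ _] at h1
  have e2 : ⟪f' x - f' y, x - y⟫ = (⟪f' x, x⟫ - ⟪f' x, y⟫) + (⟪f' y, y⟫ - ⟪f' y, x⟫) := by
    rw [inner_sub_left, inner_sub_right, inner_sub_right]; ring
  have hsum : 1 / K * ‖f' x - f' y‖ ^ 2 ≤ ⟪f' x - f' y, x - y⟫ := by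
    rw [e2]
    have : 1 / K * ‖f' x - f' y‖ ^ 2 = 1 / (2 * K) * ‖f' x - f' y‖ ^ 2
        + 1 / (2 * K) * ‖f' x - f' y‖ ^ 2 := by field_simp; ring
    linarith
  calc ‖f' x - f' y‖ ^ 2 = K * (1 / K * ‖f' x - f' y‖ ^ 2) := by field_simp
    _ ≤ K * ⟪f' x - f' y, x - y⟫ := by
        exact mul_le_mul_of_nonneg_left hsum hK.le

end Aux

set_option maxHeartbeats 1000000 in
/-- **Norm monotonicity of the proximal gradient step.** If `x⁺ = prox_{tg}(x - t∇f x)`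
and `s⁺ ∈ ∂g(x⁺)` satisfies `x⁺ = x - t(∇f x + s⁺)`, then
`‖∇f(x⁺) + s⁺‖ ≤ ρ(t)·(1/t)·‖x - x⁺‖` with `ρ(t) = max {|1 - Lt|, |1 - μt|}`. -/
theorem pgm_norm_monotone
    {E : Type*} [NormedAddCommGroup E] [InnerProductSpace ℝ E] [FiniteDimensional ℝ E]
    (f : E → ℝ) (f' : E → E) (g : E → ℝ) (μ L : ℝ) (hμ : 0 ≤ μ) (hμL : μ ≤ L) (hL : 0 < L)
    (hdiff : ∀ x, HasGradientAt f (f' x) x)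
    (hsc : ConvexOn ℝ Set.univ (fun z => f z - μ / 2 * ‖z‖ ^ 2))
    (hlip : ∀ x y, ‖f' x - f' y‖ ≤ L * ‖x - y‖)
    (hg : ConvexOn ℝ Set.univ g)
    (t : ℝ) (ht : 0 < t) (prox : E → E)
    (hprox : ∀ y : E, IsMinOn (fun z => g z + (1 / (2 * t)) * ‖z - y‖ ^ 2) Set.univ (prox y))
    (x xplus s : E)
    (hxplus : xplus = prox (x - t • f' x))
    (hs : ∀ u, g xplus + ⟪s, u - xplus⟫ ≤ g u)
    (hstep : xplus = x - t • (f' x + s)) :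
    ‖f' xplus + s‖ ≤ max |1 - L * t| |1 - μ * t| * ((1 / t) * ‖x - xplus‖) := by
  have htne : t ≠ 0 := ne_of_gt ht
  set d := x - xplus with hd
  set v := f' x - f' xplus with hv
  -- gradient of h z = f z - μ/2 ‖z‖²
  set h : E → ℝ := fun z => f z - μ / 2 * ‖z‖ ^ 2 with hhdef
  have hdiffh : ∀ z, HasGradientAt h (f' z - μ • z) z := by
    intro z
    rw [hasGradientAt_iff_hasFDerivAt]
    have h1 : HasFDerivAt f (InnerProductSpace.toDual ℝ E (f' z)) z :=
      hasGradientAt_iff_hasFDerivAt.mp (hdiff z)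
    have h2 : HasFDerivAt (fun z : E => ‖z‖ ^ 2) (2 • (innerSL ℝ z)) z := by
      simpa using (hasFDerivAt_id z).norm_sq
    have h3 : HasFDerivAt (fun z : E => μ / 2 * ‖z‖ ^ 2) ((μ / 2) • (2 • (innerSL ℝ z))) z :=
      h2.const_smul (μ / 2)
    have h4 := h1.sub h3
    refine h4.congr_fderiv ?_
    ext w
    simp [InnerProductSpace.toDual_apply_apply, inner_sub_left, real_inner_smul_left, smul_smul]
    ring
  -- monotonicity:  μ‖d‖² ≤ ⟪v, d⟫
  have hmono : μ * ‖d‖ ^ 2 ≤ ⟪v, d⟫ := by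
    have h0 := aux_mono h (fun z => f' z - μ • z) hdiffh hsc x xplus
    have e : (f' x - μ • x) - (f' xplus - μ • xplus) = v - μ • d := by
      rw [hv, hd]; module
    rw [e, inner_sub_left, real_inner_smul_left, real_inner_self_eq_norm_sq] at h0
    linarith
  have hvL : ‖v‖ ≤ L * ‖d‖ := hlip x xplus
  -- coercivity
  have hco : ‖v‖ ^ 2 + μ * L * ‖d‖ ^ 2 ≤ (μ + L) * ⟪v, d⟫ := by
    rcases eq_or_lt_of_le hμL with hEq | hlt
    · -- μ = L
      subst hEq
      nlinarith [hmono, hvL, norm_nonneg d, norm_nonneg v, hμ]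
    · -- μ < L : apply cocoercivity to h with K = L - μ
      have hK : 0 < L - μ := sub_pos.mpr hlt
      have hub : ∀ a b : E, h b ≤ h a + ⟪f' a - μ • a, b - a⟫ + (L - μ) / 2 * ‖b - a‖ ^ 2 := by
        intro a b
        have h1 := aux_upper f f' hdiff L hL.le hlip a b
        have h2 : ‖b‖ ^ 2 = ‖a‖ ^ 2 + 2 * ⟪a, b - a⟫ + ‖b - a‖ ^ 2 := by
          have := norm_add_sq_real a (b - a)
          simpa using this
        have h3 : ⟪f' a - μ • a, b - a⟫ = ⟪f' a, b - a⟫ - μ * ⟪a, b - a⟫ := by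
          rw [inner_sub_left, real_inner_smul_left]
        simp only [hhdef]
        nlinarith [h1, h2, h3]
      have hcc := aux_coco h (fun z => f' z - μ • z) hdiffh hsc (L - μ) hK hub x xplus
      have e : (f' x - μ • x) - (f' xplus - μ • xplus) = v - μ • d := by
        rw [hv, hd]; module
    
      rw [e] at hcc
      have e2 : ⟪v - μ • d, x - xplus⟫ = ⟪v, d⟫ - μ * ‖d‖ ^ 2 := by
        rw [← hd, inner_sub_left, real_inner_smul_left, real_inner_self_eq_norm_sq]
      have e3 : ‖v - μ • d‖ ^ 2 = ‖v‖ ^ 2 - 2 * μ * ⟪v, d⟫ + μ ^ 2 * ‖d‖ ^ 2 := by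
        rw [norm_sub_sq_real, real_inner_smul_right, norm_smul, Real.norm_eq_abs,
          abs_of_nonneg hμ, mul_pow]
        ring
      rw [e2, e3] at hcc
      nlinarith [hcc]
  -- μ‖d‖ ≤ ‖v‖
  have hvμ : μ * ‖d‖ ≤ ‖v‖ := by
    rcases eq_or_ne d 0 with h0 | h0
    · simp [h0, norm_nonneg]
    · have hd0 : 0 < ‖d‖ := norm_pos_iff.mpr h0
      have := real_inner_le_norm v d
      nlinarith [hmono]
  -- rewrite the goal
  have hxd : x - xplus = t • (f' x + s) := by rw [hstep]; abel
  have h1 : t • (f' xplus + s) = d - t • v := by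
    have : t • (f' xplus + s) = t • (f' x + s) - t • v := by rw [hv]; module
    rw [this, ← hxd, hd]
  have h2 : f' xplus + s = (1 / t) • (d - t • v) := by
    rw [← h1, smul_smul]
    field_simp
    exact (one_smul _ _).symm
  have h3 : ‖f' xplus + s‖ = (1 / t) * ‖d - t • v‖ := by
    rw [h2, norm_smul, Real.norm_eq_abs, abs_of_pos (by positivity)]
  -- key inequality
  set ρ := max |1 - L * t| |1 - μ * t| with hρdef
  have hρ0 : 0 ≤ ρ := le_trans (abs_nonneg _) (le_max_left _ _)
  have hexp : ‖d - t • v‖ ^ 2 = ‖d‖ ^ 2 - 2 * t * ⟪v, d⟫ + t ^ 2 * ‖v‖ ^ 2 := by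
    rw [norm_sub_sq_real, real_inner_smul_right, norm_smul, Real.norm_eq_abs,
      abs_of_pos ht, mul_pow, real_inner_comm]
    ring
  have hμL0 : 0 < μ + L := by linarith
  have hvμsq : μ ^ 2 * ‖d‖ ^ 2 ≤ ‖v‖ ^ 2 := by
    have := mul_self_le_mul_self (mul_nonneg hμ (norm_nonneg d)) hvμ
    nlinarith [this]
  have hvLsq : ‖v‖ ^ 2 ≤ L ^ 2 * ‖d‖ ^ 2 := by
    have := mul_self_le_mul_self (norm_nonneg v) hvL
    nlinarith [this]
  have hkey : ‖d - t • v‖ ^ 2 ≤ ρ ^ 2 * ‖d‖ ^ 2 := by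
    rcases le_total (t * (μ + L)) 2 with hc2 | hc2
    · have hmax : (1 - μ * t) ^ 2 ≤ ρ ^ 2 := by
        calc (1 - μ * t) ^ 2 = |1 - μ * t| ^ 2 := (sq_abs _).symm
          _ ≤ ρ ^ 2 := pow_le_pow_left₀ (abs_nonneg _) (le_max_right _ _) 2
      have hstep2 : ‖d - t • v‖ ^ 2 ≤ (1 - μ * t) ^ 2 * ‖d‖ ^ 2 := by
        rw [hexp]
        have p1 : 0 ≤ t * (2 - t * (μ + L)) * (‖v‖ ^ 2 - μ ^ 2 * ‖d‖ ^ 2) :=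
          mul_nonneg (mul_nonneg ht.le (by linarith)) (by linarith)
        have p2 : 0 ≤ 2 * t * ((μ + L) * ⟪v, d⟫ - ‖v‖ ^ 2 - μ * L * ‖d‖ ^ 2) :=
          mul_nonneg (by linarith) (by linarith)
        have key : 0 ≤ (μ + L) * ((1 - μ * t) ^ 2 * ‖d‖ ^ 2
            - (‖d‖ ^ 2 - 2 * t * ⟪v, d⟫ + t ^ 2 * ‖v‖ ^ 2)) := by nlinarith [p1, p2]
        nlinarith [key, hμL0]
      have := mul_le_mul_of_nonneg_right hmax (sq_nonneg ‖d‖)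
      linarith
    · have hmax : (1 - L * t) ^ 2 ≤ ρ ^ 2 := by
        calc (1 - L * t) ^ 2 = |1 - L * t| ^ 2 := (sq_abs _).symm
          _ ≤ ρ ^ 2 := pow_le_pow_left₀ (abs_nonneg _) (le_max_left _ _) 2
      have hstep2 : ‖d - t • v‖ ^ 2 ≤ (1 - L * t) ^ 2 * ‖d‖ ^ 2 := by
        rw [hexp]
        have p1 : 0 ≤ t * (t * (μ + L) - 2) * (L ^ 2 * ‖d‖ ^ 2 - ‖v‖ ^ 2) :=
          mul_nonneg (mul_nonneg ht.le (by linarith)) (by linarith)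
        have p2 : 0 ≤ 2 * t * ((μ + L) * ⟪v, d⟫ - ‖v‖ ^ 2 - μ * L * ‖d‖ ^ 2) :=
          mul_nonneg (by linarith) (by linarith)
        have key : 0 ≤ (μ + L) * ((1 - L * t) ^ 2 * ‖d‖ ^ 2
            - (‖d‖ ^ 2 - 2 * t * ⟪v, d⟫ + t ^ 2 * ‖v‖ ^ 2)) := by nlinarith [p1, p2]
        nlinarith [key, hμL0]
      have := mul_le_mul_of_nonneg_right hmax (sq_nonneg ‖d‖)
      linarith
  have hfin : ‖d - t • v‖ ≤ ρ * ‖d‖ := by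
    have h2' : ‖d - t • v‖ ^ 2 ≤ (ρ * ‖d‖) ^ 2 := by rw [mul_pow]; exact hkey
    exact le_of_pow_le_pow_left₀ (by norm_num) (mul_nonneg hρ0 (norm_nonneg d)) h2'
  rw [h3]
  calc (1 / t) * ‖d - t • v‖ ≤ (1 / t) * (ρ * ‖d‖) := by
        apply mul_le_mul_of_nonneg_left hfin (by positivity)
    _ = ρ * ((1 / t) * ‖d‖) := by ring
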